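/- Let A, M ∈ Mₙ(F₃) satisfy A³ = A² + A + I, M² = 0, and (A + M)³ = A + M. Then M = 0. In particular, if additionally A³ ≠ A, there is no square-zero matrix M making A + M diagonalizable. -/
import Mathlib


open Matrix

def IsDiagonalizable {F n : Type*} [Field F] [Fintype n] [DecidableEq n]
    (D : Matrix n n F) : Prop :=
  ∃ U : Matrix n n F, IsUnit U ∧ (U⁻¹ * D * U).IsDiag

set_option maxHeartbeats 1600000 in
private theorem stmt_18_key {n : ℕ} (A M : Matrix (Fin n) (Fin n) (ZMod 3))
    (hA : A ^ 3 = A ^ 2 + A + 1) (hM : M ^ 2 = 0)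
    (hD : (A + M) ^ 3 = A + M) : M = 0 := by
  have h3 : (3 : Matrix (Fin n) (Fin n) (ZMod 3)) = 0 := by
    have h : (3 : Matrix (Fin n) (Fin n) (ZMod 3))
        = (1 : Matrix (Fin n) (Fin n) (ZMod 3)) + 1 + 1 := by norm_num
    rw [h]; ext i j
    by_cases hij : i = j <;> simp [Matrix.add_apply, Matrix.one_apply, hij]
    decide
  have haz : A ^ 3 - (A ^ 2 + A + 1) = 0 := sub_eq_zero_of_eq hA
  have hdz : (A + M) ^ 3 - (A + M) = 0 := sub_eq_zero_of_eq hD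
  have e2 : A ^ 2 * M + M + A * M * A * M + M * A ^ 2 * M = 0 := by
    calc A ^ 2 * M + M + A * M * A * M + M * A ^ 2 * M
        = ((A + M) ^ 3 - (A + M)) * M - (A ^ 3 - (A ^ 2 + A + 1)) * M
          - (A ^ 2 * M ^ 2 + A * M ^ 2 * M + M * A * M ^ 2 + M ^ 2 * A * M
            + M ^ 2 * M ^ 2 - M ^ 2) := by noncomm_ring
      _ = 0 := by rw [hdz, haz, hM]; simp
  have e1 : M * A ^ 2 * M + M * A * M * A * M = 0 := by
    calc M * A ^ 2 * M + M * A * M * A * M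
        = M * (A ^ 2 * M + M + A * M * A * M + M * A ^ 2 * M) - M ^ 2
          - M ^ 2 * A ^ 2 * M := by noncomm_ring
      _ = 0 := by rw [e2, hM]; simp
  have G1pre : M * A ^ 2 * M + 2 * (M * A * M) - 2 * (M * A * M * A * M * A * M) = 0 := by
    calc M * A ^ 2 * M + 2 * (M * A * M) - 2 * (M * A * M * A * M * A * M)
        = M * A * (A ^ 2 * M + M + A * M * A * M + M * A ^ 2 * M)
          - M * (A ^ 3 - (A ^ 2 + A + 1)) * M - M ^ 2
          - (M * A ^ 2 * M + M * A * M * A * M) * (A * M)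
          - M * A * (M * A ^ 2 * M + M * A * M * A * M) := by noncomm_ring
      _ = 0 := by rw [e2, haz, e1, hM]; simp
  have G2 : 2 * (M * A * M) - M * A * M * A * M - 2 * (M * A * M * A * M * A * M) = 0 := by
    calc 2 * (M * A * M) - M * A * M * A * M - 2 * (M * A * M * A * M * A * M)
        = (M * A ^ 2 * M + 2 * (M * A * M) - 2 * (M * A * M * A * M * A * M))
          - (M * A ^ 2 * M + M * A * M * A * M) := by noncomm_ring
      _ = 0 := by rw [G1pre, e1]; simp
  have G1 : M * A * M * A * M * A * M - M * A * M * A * M - M * A * M = 0 := by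
    calc M * A * M * A * M * A * M - M * A * M * A * M - M * A * M
        = (2 * (M * A * M) - M * A * M * A * M - 2 * (M * A * M * A * M * A * M))
          + 3 * (M * A * M * A * M * A * M) - 3 * (M * A * M) := by noncomm_ring
      _ = 0 := by rw [G2, h3]; simp
  have e1' : M * A ^ 2 * M = -(M * A * M * A * M) := eq_neg_of_add_eq_zero_left e1
  -- epsilon = 0 : C0 = A^2 - A - 1, a(T) = 1 + T^2
  have hC0 : A * (A ^ 2 - A - 1) = 1 := by
    calc A * (A ^ 2 - A - 1) = (A ^ 3 - (A ^ 2 + A + 1)) + 1 := by noncomm_ring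
      _ = 1 := by rw [haz]; simp
  have hMCM0 : M * (A ^ 2 - A - 1) * M = -(M * A * M) - M * A * M * A * M := by
    calc M * (A ^ 2 - A - 1) * M = M * A ^ 2 * M - M * A * M - M ^ 2 := by noncomm_ring
      _ = -(M * A * M) - M * A * M * A * M := by rw [e1', hM]; abel
  have KEY0 : (1 + M * (A ^ 2 - A - 1)) * (1 + M * A * M * A) * M = M := by
    calc (1 + M * (A ^ 2 - A - 1)) * (1 + M * A * M * A) * M
        = (1 + M * A * M * A) * M + (M * (A ^ 2 - A - 1) * M)
          + (M * (A ^ 2 - A - 1) * M) * (A * M) * (A * M) := by noncomm_ring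
      _ = (1 + M * A * M * A) * M + (-(M * A * M) - M * A * M * A * M)
          + (-(M * A * M) - M * A * M * A * M) * (A * M) * (A * M) := by rw [hMCM0]
      _ = M + 1 * (M * A * M * A * M * A * M - M * A * M * A * M - M * A * M)
          + (-1) * (M * A * (M * A * M * A * M * A * M - M * A * M * A * M - M * A * M))
          + 3 * (-(M * A * M * A * M * A * M)) := by noncomm_ring
      _ = M := by rw [G1, h3]; simp
  have hR0 : (A + M) * ((A ^ 2 - A - 1)
      * (1 - (1 + M * A * M * A) * M * (A ^ 2 - A - 1))) = 1 := by
    calc (A + M) * ((A ^ 2 - A - 1) * (1 - (1 + M * A * M * A) * M * (A ^ 2 - A - 1)))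
        = 1 + (M - (1 + M * (A ^ 2 - A - 1)) * (1 + M * A * M * A) * M) * (A ^ 2 - A - 1)
          + (A * (A ^ 2 - A - 1) - 1)
            * (1 - (1 + M * A * M * A) * M * (A ^ 2 - A - 1)) := by noncomm_ring
      _ = 1 := by rw [KEY0, hC0]; simp
  -- epsilon = 1 : C1 = 1 - A^2, a(T) = 1 - T - T^2
  have hC1 : (A - 1) * (1 - A ^ 2) = 1 := by
    calc (A - 1) * (1 - A ^ 2) = 1 - (A ^ 3 - (A ^ 2 + A + 1)) - 3 * (1 : Matrix (Fin n) (Fin n) (ZMod 3)) := by noncomm_ring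
      _ = 1 := by rw [haz, h3]; simp
  have hMCM1 : M * (1 - A ^ 2) * M = M * A * M * A * M := by
    calc M * (1 - A ^ 2) * M = M ^ 2 - M * A ^ 2 * M := by noncomm_ring
      _ = M * A * M * A * M := by rw [hM, e1']; abel
  have KEY1 : (1 + M * (1 - A ^ 2)) * (1 - M * A - M * A * M * A) * M = M := by
    calc (1 + M * (1 - A ^ 2)) * (1 - M * A - M * A * M * A) * M
        = (1 - M * A - M * A * M * A) * M + (M * (1 - A ^ 2) * M)
          + (-1) * ((M * (1 - A ^ 2) * M) * (A * M))
          + (-1) * ((M * (1 - A ^ 2) * M) * (A * M) * (A * M)) := by noncomm_ring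
      _ = (1 - M * A - M * A * M * A) * M + (M * A * M * A * M)
          + (-1) * ((M * A * M * A * M) * (A * M))
          + (-1) * ((M * A * M * A * M) * (A * M) * (A * M)) := by rw [hMCM1]
      _ = M + 1 * (M * A * M * A * M * A * M - M * A * M * A * M - M * A * M)
          + (-1) * (M * A * (M * A * M * A * M * A * M - M * A * M * A * M - M * A * M))
          + 3 * (-(M * A * M * A * M * A * M)) := by noncomm_ring
      _ = M := by rw [G1, h3]; simp
  have hR1 : ((A + M) - 1) * ((1 - A ^ 2)
      * (1 - (1 - M * A - M * A * M * A) * M * (1 - A ^ 2))) = 1 := by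
    calc ((A + M) - 1) * ((1 - A ^ 2) * (1 - (1 - M * A - M * A * M * A) * M * (1 - A ^ 2)))
        = 1 + (M - (1 + M * (1 - A ^ 2)) * (1 - M * A - M * A * M * A) * M) * (1 - A ^ 2)
          + ((A - 1) * (1 - A ^ 2) - 1)
            * (1 - (1 - M * A - M * A * M * A) * M * (1 - A ^ 2)) := by noncomm_ring
      _ = 1 := by rw [KEY1, hC1]; simp
  -- epsilon = -1 : C = -(1 + A + A^2), a(T) = 1 - T + T^2
  have hCm1 : (A + 1) * (-(1 + A + A ^ 2)) = 1 := by
    calc (A + 1) * (-(1 + A + A ^ 2))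
        = 1 - (A ^ 3 - (A ^ 2 + A + 1)) - 3 * (1 + A + A ^ 2) := by noncomm_ring
      _ = 1 := by rw [haz, h3]; simp
  have hMCMm : M * (-(1 + A + A ^ 2)) * M = -(M * A * M) + M * A * M * A * M := by
    calc M * (-(1 + A + A ^ 2)) * M = -(M ^ 2) - M * A * M - M * A ^ 2 * M := by noncomm_ring
      _ = -(M * A * M) + M * A * M * A * M := by rw [hM, e1']; abel
  have KEYm : (1 + M * (-(1 + A + A ^ 2))) * (1 - M * A + M * A * M * A) * M = M := by
    calc (1 + M * (-(1 + A + A ^ 2))) * (1 - M * A + M * A * M * A) * M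
        = (1 - M * A + M * A * M * A) * M + (M * (-(1 + A + A ^ 2)) * M)
          + (-1) * ((M * (-(1 + A + A ^ 2)) * M) * (A * M))
          + (M * (-(1 + A + A ^ 2)) * M) * (A * M) * (A * M) := by noncomm_ring
      _ = (1 - M * A + M * A * M * A) * M + (-(M * A * M) + M * A * M * A * M)
          + (-1) * ((-(M * A * M) + M * A * M * A * M) * (A * M))
          + (-(M * A * M) + M * A * M * A * M) * (A * M) * (A * M) := by rw [hMCMm]
      _ = M + (-1) * (M * A * M * A * M * A * M - M * A * M * A * M - M * A * M)
          + 1 * (M * A * (M * A * M * A * M * A * M - M * A * M * A * M - M * A * M))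
          + 3 * (-(M * A * M) + M * A * M * A * M) := by noncomm_ring
      _ = M := by rw [G1, h3]; simp
  have hRm1 : ((A + M) + 1) * ((-(1 + A + A ^ 2))
      * (1 - (1 - M * A + M * A * M * A) * M * (-(1 + A + A ^ 2)))) = 1 := by
    calc ((A + M) + 1) * ((-(1 + A + A ^ 2))
          * (1 - (1 - M * A + M * A * M * A) * M * (-(1 + A + A ^ 2))))
        = 1 + (M - (1 + M * (-(1 + A + A ^ 2))) * (1 - M * A + M * A * M * A) * M)
            * (-(1 + A + A ^ 2))
          + ((A + 1) * (-(1 + A + A ^ 2)) - 1)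
            * (1 - (1 - M * A + M * A * M * A) * M * (-(1 + A + A ^ 2))) := by noncomm_ring
      _ = 1 := by rw [KEYm, hCm1]; simp
  -- assemble: (A+M)(A+M-1)(A+M+1) = 0 and all three factors are right-invertible
  have hB3 : (A + M) * ((A + M) - 1) * ((A + M) + 1) = 0 := by
    calc (A + M) * ((A + M) - 1) * ((A + M) + 1) = (A + M) ^ 3 - (A + M) := by noncomm_ring
      _ = 0 := hdz
  have z1 : (A + M) * ((A + M) - 1) = 0 := by
    have h : ((A + M) * ((A + M) - 1) * ((A + M) + 1)) * ((-(1 + A + A ^ 2))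
          * (1 - (1 - M * A + M * A * M * A) * M * (-(1 + A + A ^ 2))))
        = (A + M) * ((A + M) - 1) * (((A + M) + 1) * ((-(1 + A + A ^ 2))
          * (1 - (1 - M * A + M * A * M * A) * M * (-(1 + A + A ^ 2))))) := by noncomm_ring
    rw [hB3, zero_mul, hRm1, mul_one] at h
    exact h.symm
  have z2 : A + M = 0 := by
    have h : ((A + M) * ((A + M) - 1)) * ((1 - A ^ 2)
          * (1 - (1 - M * A - M * A * M * A) * M * (1 - A ^ 2)))
        = (A + M) * (((A + M) - 1) * ((1 - A ^ 2)
          * (1 - (1 - M * A - M * A * M * A) * M * (1 - A ^ 2)))) := by noncomm_ring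
    rw [z1, zero_mul, hR1, mul_one] at h
    exact h.symm
  have z3 : (1 : Matrix (Fin n) (Fin n) (ZMod 3)) = 0 := by
    have h := hR0
    rw [z2, zero_mul] at h
    exact h.symm
  calc M = 1 * M := (one_mul M).symm
    _ = 0 * M := by rw [z3]
    _ = 0 := zero_mul M

/-- Step (5): over 𝔽₃, if A³ = A² + A + I, M² = 0 and (A+M)³ = A+M, then
M = 0; in particular, if A³ ≠ A then no square-zero matrix makes A
diagonalizable after perturbation. -/
theorem stmt_18 {n : ℕ} (A M : Matrix (Fin n) (Fin n) (ZMod 3))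
    (hA : A ^ 3 = A ^ 2 + A + 1) (hM : M ^ 2 = 0)
    (hD : (A + M) ^ 3 = A + M) :
    M = 0 ∧ (A ^ 3 ≠ A →
      ¬ ∃ M' : Matrix (Fin n) (Fin n) (ZMod 3),
          M' ^ 2 = 0 ∧ IsDiagonalizable (A + M')) := by
  refine ⟨stmt_18_key A M hA hM hD, ?_⟩
  rintro hA3 ⟨M', hM'2, hdg⟩
  obtain ⟨U, hU, hdiag⟩ :=
    (hdg : ∃ U : Matrix (Fin n) (Fin n) (ZMod 3),
      IsUnit U ∧ (U⁻¹ * (A + M') * U).IsDiag)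
  have hUdet := (Matrix.isUnit_iff_isUnit_det U).mp hU
  have hUU : U * U⁻¹ = 1 := Matrix.mul_nonsing_inv U hUdet
  have hU'U : U⁻¹ * U = 1 := Matrix.nonsing_inv_mul U hUdet
  set D := U⁻¹ * (A + M') * U with hDdef
  have hDdiag : Matrix.diagonal D.diag = D := hdiag.diagonal_diag
  have hx3 : ∀ x : ZMod 3, x ^ 3 = x := by decide
  have hD3 : D ^ 3 = D := by
    conv_lhs => rw [← hDdiag, Matrix.diagonal_pow]
    rw [show D.diag ^ 3 = D.diag from funext fun i => hx3 _, hDdiag]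
  have hAM' : A + M' = U * D * U⁻¹ := by
    rw [hDdef]
    calc A + M' = (U * U⁻¹) * (A + M') * (U * U⁻¹) := by rw [hUU]; noncomm_ring
      _ = U * (U⁻¹ * (A + M') * U) * U⁻¹ := by noncomm_ring
  have h1 : (U * D * U⁻¹) ^ 3 = U * D * ((U⁻¹ * U) * (D * ((U⁻¹ * U) * (D * U⁻¹)))) := by
    noncomm_ring
  rw [hU'U] at h1
  have h2 : U * D * ((1 : Matrix (Fin n) (Fin n) (ZMod 3))
      * (D * ((1 : Matrix (Fin n) (Fin n) (ZMod 3)) * (D * U⁻¹)))) = U * D ^ 3 * U⁻¹ := by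
    noncomm_ring
  have hD' : (A + M') ^ 3 = A + M' := by
    rw [hAM', h1, h2, hD3]
  have hM'0 : M' = 0 := stmt_18_key A M' hA hM'2 hD'
  rw [hM'0, add_zero] at hD'
  exact hA3 hD'
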